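/- In the resource competition game with parameter r > 1, let (x₁ᴮᴮ, x₂ᴮᴮ) = (r/(1+r)², r/(1+r)²) with payoffs u₁ᴮᴮ = r²/(1+r)², u₂ᴮᴮ = 1/(1+r)², and let (x₁ᴮᴸ, x₂ᴮᴸ) = ((1/(2r))(1 − 1/(2r)), 1/(4r)) with payoffs u₁ᴮᴸ = (1 − 1/(2r))², u₂ᴮᴸ = 1/(4r). Then x₁ᴮᴸ < x₁ᴮᴮ, x₂ᴮᴸ < x₂ᴮᴮ, u₁ᴮᴸ > u₁ᴮᴮ, and u₂ᴮᴸ > u₂ᴮᴮ: the inferior player's one-sided learning decreases both players' costs and increases both players' payoffs. -/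

import Mathlib

/-- In the resource competition game with `r > 1`, comparing the
BL (Stackelberg) equilibrium to the BB (Nash) equilibrium: the inferior
player's one-sided learning decreases both players' costs and increases both
players' payoffs: `x₁ᴮᴸ < x₁ᴮᴮ`, `x₂ᴮᴸ < x₂ᴮᴮ`, `u₁ᴮᴸ > u₁ᴮᴮ`,
`u₂ᴮᴸ > u₂ᴮᴮ`. -/
theorem rc_bl_vs_bb (r : ℝ) (hr : 1 < r) :
    (1 / (2 * r)) * (1 - 1 / (2 * r)) < r / (1 + r) ^ 2 ∧
    1 / (4 * r) < r / (1 + r) ^ 2 ∧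
    (1 - 1 / (2 * r)) ^ 2 > r ^ 2 / (1 + r) ^ 2 ∧
    1 / (4 * r) > 1 / (1 + r) ^ 2 := by
  have hr0 : (0:ℝ) < r := by linarith
  have h1 : (0:ℝ) < (1 + r) ^ 2 := by positivity
  refine ⟨?_, ?_, ?_, ?_⟩
  · have h2 : 1 / (2 * r) * (1 - 1 / (2 * r)) = (2*r - 1)/(4*r^2) := by
      rw [eq_div_iff (by positivity)]; field_simp; ring
    rw [h2, div_lt_div_iff₀ (by positivity) h1]
    nlinarith [sq_nonneg (r - 1), mul_pos hr0 hr0, mul_pos (mul_pos hr0 hr0) hr0]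
  · rw [div_lt_div_iff₀ (by positivity) h1]
    nlinarith [sq_nonneg (r - 1)]
  · rw [gt_iff_lt, div_lt_iff₀ h1]
    have h2 : (1 - 1 / (2 * r)) = (2*r - 1)/(2*r) := by field_simp
    rw [h2, div_pow, div_mul_eq_mul_div, lt_div_iff₀ (by positivity)]
    nlinarith [sq_nonneg (r - 1), mul_pos hr0 hr0, mul_pos (mul_pos hr0 hr0) hr0]
  · rw [gt_iff_lt, div_lt_div_iff₀ h1 (by positivity)]
    nlinarith [sq_nonneg (r - 1)]
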